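/- There is no finite constant C such that the adjoint estimate ‖ρ*g‖_{L^{d+1}(ℝ^d × ℝ^d)} ≤ C ‖g‖_{L^{d+1}_t L^{(d+1)/2}_x} holds for all g ∈ 𝒮(ℝ × ℝ^d), where ρ*g(x,v) = ∫_ℝ g(t, x + tv) dt. -/

import Mathlib

open MeasureTheory ENNReal

section Aux

/-- A smooth bump on `ℝ × ℝ^d`, equal to `1` on the closed ball of radius 2 and
supported in the ball of radius 3. -/
noncomputable def dualBump (d : ℕ) : ContDiffBump (0 : ℝ × (Fin d → ℝ)) :=
  ⟨2, 3, by norm_num, by norm_num⟩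

/-- The bump as a Schwartz function. -/
noncomputable def dualG (d : ℕ) : SchwartzMap (ℝ × (Fin d → ℝ)) ℝ where
  toFun := dualBump d
  smooth' := (dualBump d).contDiff
  decay' := by
    intro k n
    have h1 : HasCompactSupport (iteratedFDeriv ℝ n (dualBump d)) :=
      (dualBump d).hasCompactSupport.iteratedFDeriv n
    have hc : Continuous fun x => ‖x‖ ^ k * ‖iteratedFDeriv ℝ n (⇑(dualBump d)) x‖ :=
      ((continuous_norm.pow k).mul
        (((dualBump d).contDiff (n := (n : ℕ∞))).continuous_iteratedFDeriv le_rfl).norm)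
    have h2 : HasCompactSupport fun x => ‖x‖ ^ k * ‖iteratedFDeriv ℝ n (⇑(dualBump d)) x‖ :=
      HasCompactSupport.mul_left h1.norm
    obtain ⟨C, hC⟩ := hc.bounded_above_of_compact_support h2
    refine ⟨C, fun x => ?_⟩
    have := hC x
    rwa [Real.norm_eq_abs, abs_of_nonneg (by positivity)] at this

lemma dualG_apply (d : ℕ) (p : ℝ × (Fin d → ℝ)) : dualG d p = dualBump d p := rfl

/-- Dyadic boxes in `x`. -/
def dualBox (k m : ℕ) : Set (Fin (k+1) → ℝ) :=
  Set.pi Set.univ (fun j => if j = 0 then Set.Ico (-(2^(m+3):ℝ)) (-(2^(m+2)))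
    else Set.Icc (-(2^(m+2):ℝ)) (2^(m+2)))

/-- Velocity region attached to a point `x`. -/
def dualV (k : ℕ) (x : Fin (k+1) → ℝ) : Set (Fin (k+1) → ℝ) :=
  {v | v 0 ∈ Set.Icc (4*(-(x 0))/7) (4*(-(x 0))/5) ∧
    ∀ j : Fin (k+1), j ≠ 0 → |v j + x j * v 0 / (-(x 0))| ≤ 1/2}

lemma dualBox_mem {k m : ℕ} {x : Fin (k+1) → ℝ} (hx : x ∈ dualBox k m) :
    (x 0 ∈ Set.Ico (-(2^(m+3):ℝ)) (-(2^(m+2))) ∧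
      ∀ j : Fin (k+1), j ≠ 0 → |x j| ≤ (2^(m+2):ℝ)) := by
  have h := Set.mem_univ_pi.1 hx
  constructor
  · have h0 := h 0
    simpa using h0
  · intro j hj
    have hj' := h j
    rw [if_neg hj] at hj'
    rw [abs_le]
    exact ⟨by linarith [hj'.1], hj'.2⟩

lemma dualBox_measurableSet (k m : ℕ) : MeasurableSet (dualBox k m) := by
  apply MeasurableSet.univ_pi
  intro j
  by_cases hj : j = 0
  · rw [hj, if_pos rfl]; exact measurableSet_Ico
  · rw [if_neg hj]; exact measurableSet_Icc

lemma dualBox_volume (k m : ℕ) :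
    volume (dualBox k m) = ENNReal.ofReal ((2^(m+2):ℝ) * ((2^(m+3):ℝ))^k) := by
  rw [dualBox, volume_pi_pi]
  have h0 : (fun j : Fin (k+1) => volume (if j = 0 then Set.Ico (-(2^(m+3):ℝ)) (-(2^(m+2)))
      else Set.Icc (-(2^(m+2):ℝ)) (2^(m+2))))
      = fun j : Fin (k+1) => if j = 0 then ENNReal.ofReal ((2^(m+2):ℝ))
        else ENNReal.ofReal ((2^(m+3):ℝ)) := by
    funext j
    by_cases hj : j = 0
    · rw [if_pos hj, if_pos hj, Real.volume_Ico]
      congr 1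
      rw [show ((m+3:ℕ)) = (m+2)+1 from rfl, pow_succ]
      ring
    · rw [if_neg hj, if_neg hj, Real.volume_Icc]
      congr 1
      rw [show ((m+3:ℕ)) = (m+2)+1 from rfl, pow_succ]
      ring
  rw [h0, Fin.prod_univ_succ]
  rw [if_pos rfl]
  have h1 : ∀ i : Fin k, (if (Fin.succ i : Fin (k+1)) = 0 then ENNReal.ofReal ((2^(m+2):ℝ))
      else ENNReal.ofReal ((2^(m+3):ℝ))) = ENNReal.ofReal ((2^(m+3):ℝ)) := by
    intro i; rw [if_neg (Fin.succ_ne_zero i)]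
  simp_rw [h1]
  rw [Finset.prod_const, Finset.card_univ, Fintype.card_fin]
  rw [← ENNReal.ofReal_pow (by positivity), ← ENNReal.ofReal_mul (by positivity)]

lemma dualBox_disjoint (k : ℕ) : Pairwise (Function.onFun Disjoint (dualBox k)) := by
  intro m m' hmm
  rw [Function.onFun, Set.disjoint_left]
  intro x hx hx'
  have h1 := (dualBox_mem hx).1
  have h2 := (dualBox_mem hx').1
  simp only [Set.mem_Ico] at h1 h2
  rcases lt_or_gt_of_ne hmm with h | h
  · have hle : (2:ℝ)^(m+3) ≤ 2^(m'+2) := by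
      apply pow_le_pow_right₀ (by norm_num); omega
    linarith [h1.1, h2.2]
  · have hle : (2:ℝ)^(m'+3) ≤ 2^(m+2) := by
      apply pow_le_pow_right₀ (by norm_num); omega
    linarith [h1.2, h2.1]

lemma dualV_measurableSet (k : ℕ) (x : Fin (k+1) → ℝ) : MeasurableSet (dualV k x) := by
  have : dualV k x = {v : Fin (k+1) → ℝ | v 0 ∈ Set.Icc (4*(-(x 0))/7) (4*(-(x 0))/5)} ∩
      ⋂ j : Fin (k+1), {v : Fin (k+1) → ℝ | j ≠ 0 → |v j + x j * v 0 / (-(x 0))| ≤ 1/2} := by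
    ext v
    simp only [dualV, Set.mem_setOf_eq, Set.mem_inter_iff, Set.mem_iInter]
  rw [this]
  apply MeasurableSet.inter
  · exact (measurable_pi_apply 0) measurableSet_Icc
  · apply MeasurableSet.iInter
    intro j
    by_cases hj : j = 0
    · have : {v : Fin (k+1) → ℝ | j ≠ 0 → |v j + x j * v 0 / (-(x 0))| ≤ 1/2} = Set.univ := by
        ext v; simp [hj]
      rw [this]; exact MeasurableSet.univ
    · have : {v : Fin (k+1) → ℝ | j ≠ 0 → |v j + x j * v 0 / (-(x 0))| ≤ 1/2}
          = (fun v : Fin (k+1) → ℝ => v j + x j * v 0 / (-(x 0))) ⁻¹'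
            (Set.Icc (-(1/2)) (1/2)) := by
        ext v; simp [hj, abs_le]
      rw [this]
      have hmf : Measurable (fun v : Fin (k+1) → ℝ => v j + x j * v 0 / (-(x 0))) := by
        fun_prop
      exact hmf measurableSet_Icc

set_option maxHeartbeats 1000000 in
lemma dualV_volume (k : ℕ) (x : Fin (k+1) → ℝ) :
    volume (dualV k x) = ENNReal.ofReal (8 * (-(x 0)) / 35) := by
  set R : ℝ := -(x 0) with hRdef
  set e := MeasurableEquiv.piFinSuccAbove (fun _ : Fin (k+1) => ℝ) 0 with hedef
  set W : Set (ℝ × (Fin k → ℝ)) :=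
    {p | p.1 ∈ Set.Icc (4*R/7) (4*R/5) ∧
      ∀ j : Fin k, |p.2 j + x (Fin.succAbove 0 j) * p.1 / R| ≤ 1/2} with hWdef
  have hWmeas : MeasurableSet W := by
    apply MeasurableSet.inter
    · exact measurable_fst measurableSet_Icc
    · show MeasurableSet {p : ℝ × (Fin k → ℝ) |
        ∀ j : Fin k, |p.2 j + x (Fin.succAbove 0 j) * p.1 / R| ≤ 1/2}
      rw [Set.setOf_forall]
      apply MeasurableSet.iInter
      intro j
      have : {p : ℝ × (Fin k → ℝ) | |p.2 j + x (Fin.succAbove 0 j) * p.1 / R| ≤ 1/2}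
          = (fun p : ℝ × (Fin k → ℝ) => p.2 j + x (Fin.succAbove 0 j) * p.1 / R) ⁻¹'
            (Set.Icc (-(1/2)) (1/2)) := by
        ext p; simp [abs_le]
      rw [this]
      have hmf : Measurable (fun p : ℝ × (Fin k → ℝ) =>
          p.2 j + x (Fin.succAbove 0 j) * p.1 / R) := by fun_prop
      exact hmf measurableSet_Icc
  have hVW : dualV k x = e ⁻¹' W := by
    ext v
    simp only [dualV, Set.mem_setOf_eq, Set.mem_preimage, hedef,
      MeasurableEquiv.piFinSuccAbove_apply, hWdef]
    constructor
    · rintro ⟨h1, h2⟩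
      exact ⟨h1, fun j => h2 _ (by simp [Fin.succAbove_zero, Fin.succ_ne_zero])⟩
    · rintro ⟨h1, h2⟩
      refine ⟨h1, fun j hj => ?_⟩
      obtain ⟨i, rfl⟩ := Fin.exists_succ_eq.2 hj
      have := h2 i
      simpa [Fin.succAbove_zero, Fin.tail, hRdef] using this
  have hmp := MeasureTheory.volume_preserving_piFinSuccAbove (fun _ : Fin (k+1) => ℝ) 0
  rw [hVW, hmp.measure_preimage hWmeas.nullMeasurableSet]
  have hprod : (volume : Measure (ℝ × (Fin k → ℝ))) = (volume : Measure ℝ).prod volume :=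
    rfl
  rw [hprod, Measure.prod_apply hWmeas]
  have hslice : ∀ a : ℝ, volume (Prod.mk a ⁻¹' W)
      = Set.indicator (Set.Icc (4*R/7) (4*R/5)) (fun _ => (1:ℝ≥0∞)) a := by
    intro a
    by_cases ha : a ∈ Set.Icc (4*R/7) (4*R/5)
    · rw [Set.indicator_of_mem ha]
      have hbox : Prod.mk a ⁻¹' W = Set.pi Set.univ
          (fun j : Fin k => Set.Icc (-(x (Fin.succAbove 0 j) * a / R) - 1/2)
            (-(x (Fin.succAbove 0 j) * a / R) + 1/2)) := by
        ext y
        simp only [Set.mem_preimage, hWdef, Set.mem_setOf_eq, Set.mem_univ_pi, Set.mem_Icc]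
        constructor
        · rintro ⟨-, h2⟩ j
          have := abs_le.1 (h2 j)
          constructor <;> linarith [this.1, this.2]
        · intro h
          refine ⟨ha, fun j => ?_⟩
          rw [abs_le]
          constructor <;> linarith [(h j).1, (h j).2]
      rw [hbox, volume_pi_pi]
      simp only [Real.volume_Icc]
      norm_num
    · rw [Set.indicator_of_notMem ha]
      have : Prod.mk a ⁻¹' W = ∅ := by
        ext y; simp only [Set.mem_preimage, hWdef, Set.mem_setOf_eq, Set.mem_empty_iff_false,
          iff_false, not_and]
        intro h; exact absurd h ha
      rw [this]; simp
  simp_rw [hslice]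
  rw [lintegral_indicator measurableSet_Icc]
  rw [setLIntegral_const, one_mul, Real.volume_Icc]
  congr 1
  ring

set_option maxHeartbeats 1000000 in
/-- Main pointwise estimate: the time integral along the line is at least `1/(8R)`. -/
lemma dual_integral_lower (k m : ℕ) (x v : Fin (k+1) → ℝ)
    (hx : x ∈ dualBox k m) (hv : v ∈ dualV k x) :
    1/(8 * (-(x 0))) ≤ ∫ t : ℝ, dualG (k+1) (t, x + t • v) := by
  obtain ⟨hx0, hxj⟩ := dualBox_mem hx
  obtain ⟨hv0, hvj⟩ := hv
  set R : ℝ := -(x 0) with hRdef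
  have hpow : (4:ℝ) ≤ 2^(m+2) := by
    calc (4:ℝ) = 2^2 := by norm_num
    _ ≤ 2^(m+2) := by
      apply pow_le_pow_right₀ (by norm_num)
      omega
  have hR4 : 4 ≤ R := by
    have := hx0.2
    simp only [hRdef]
    nlinarith
  have hRpos : (0:ℝ) < R := by linarith
  have hxjR : ∀ j : Fin (k+1), j ≠ 0 → |x j| ≤ R := fun j hj =>
    (hxj j hj).trans (by nlinarith [hx0.2])
  have hv0l : 4*R/7 ≤ v 0 := hv0.1
  have hv0r : v 0 ≤ 4*R/5 := hv0.2
  have hv0pos : 0 < v 0 := lt_of_lt_of_le (by positivity) hv0l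
  have hv02 : 2 ≤ v 0 := by nlinarith
  set s : ℝ := R / v 0 with hsdef
  have hsv : s * v 0 = R := div_mul_cancel₀ _ (ne_of_gt hv0pos)
  have hs1 : 5/4 ≤ s := by rw [hsdef, le_div_iff₀ hv0pos]; nlinarith
  have hs2 : s ≤ 7/4 := by rw [hsdef, div_le_iff₀ hv0pos]; nlinarith
  set δ : ℝ := 1/(8 * v 0) with hδdef
  have hδpos : 0 < δ := by positivity
  have hδv : δ * v 0 = 1/8 := by rw [hδdef]; field_simp
  have hδ16 : δ ≤ 1/16 := by rw [hδdef, div_le_iff₀ (by positivity)]; nlinarith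
  have hrIn : (dualBump (k+1)).rIn = 2 := rfl
  -- pointwise: the bump is 1 on the window
  have hG1 : ∀ t ∈ Set.Icc s (s + δ), (dualBump (k+1)) (t, x + t • v) = 1 := by
    intro t ht
    have hts : 0 ≤ t - s := by linarith [ht.1]
    have hts' : t - s ≤ δ := by linarith [ht.2]
    apply ContDiffBump.one_of_mem_closedBall
    rw [Metric.mem_closedBall, dist_zero_right, hrIn, Prod.norm_def]
    apply max_le
    · show ‖t‖ ≤ 2
      rw [Real.norm_eq_abs, abs_le]
      constructor <;> nlinarith [ht.1, ht.2]
    · show ‖x + t • v‖ ≤ 2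
      rw [pi_norm_le_iff_of_nonneg (by norm_num)]
      intro j
      show |x j + t * v j| ≤ 2
      by_cases hj : j = 0
      · subst hj
        have heq0 : x 0 + t * v 0 = (t - s) * v 0 := by
          linear_combination hsv + hRdef
        rw [heq0, abs_le]
        have hub : (t - s) * v 0 ≤ 1/8 := by
          calc (t - s) * v 0 ≤ δ * v 0 := mul_le_mul_of_nonneg_right hts' hv0pos.le
          _ = 1/8 := hδv
        have hlb : 0 ≤ (t - s) * v 0 := mul_nonneg hts hv0pos.le
        constructor <;> linarith
      · have hb := hvj j hj
        have hxjb := hxjR j hj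
        have e1 : s * (v j + x j * v 0 / R) + (t - s) * v j = x j + t * v j := by
          have h2 : s * (x j * v 0 / R) = x j := by
            rw [hsdef]; field_simp
          linear_combination h2
        rw [← e1]
        have hvjb : |v j| ≤ 1/2 + v 0 := by
          have hq : |x j * v 0 / R| ≤ v 0 := by
            rw [abs_div, abs_mul, abs_of_pos hv0pos, abs_of_pos hRpos, div_le_iff₀ hRpos]
            nlinarith [abs_nonneg (x j)]
          have := abs_sub_abs_le_abs_sub (v j) (-(x j * v 0 / R))
          simp only [abs_neg, sub_neg_eq_add] at this
          linarith
        have b1 : |s * (v j + x j * v 0 / R)| ≤ s * (1/2) := by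
          rw [abs_mul, abs_of_nonneg (by linarith : (0:ℝ) ≤ s)]
          exact mul_le_mul_of_nonneg_left hb (by linarith)
        have b2 : |(t - s) * v j| ≤ δ * (1/2 + v 0) := by
          rw [abs_mul, abs_of_nonneg hts]
          exact mul_le_mul hts' hvjb (abs_nonneg _) hδpos.le
        have hc1 : δ * (1/2 + v 0) = 1/(16 * v 0) + 1/8 := by
          rw [hδdef]; field_simp; ring
        have hc2 : 1/(16 * v 0) ≤ 1/32 := by
          rw [div_le_div_iff₀ (by positivity) (by norm_num)]
          linarith
        have := (abs_add_le (s * (v j + x j * v 0 / R)) ((t - s) * v j)).trans (add_le_add b1 b2)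
        rw [hc1] at this
        linarith
  -- integrability
  set G : ℝ → ℝ := fun t => (dualBump (k+1)) (t, x + t • v) with hGdef
  have hGcont : Continuous G :=
    (dualBump (k+1)).continuous.comp (continuous_id.prodMk
      (continuous_const.add (continuous_id.smul continuous_const)))
  have hGsupp : HasCompactSupport G := by
    apply HasCompactSupport.intro (isCompact_Icc (a := (-3:ℝ)) (b := 3))
    intro t ht
    apply ContDiffBump.zero_of_le_dist
    rw [dist_zero_right, Prod.norm_def]
    have h3t : (3:ℝ) ≤ |t| := by
      simp only [Set.mem_Icc, not_and_or, not_le] at ht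
      rcases ht with h | h
      · rw [abs_of_neg (by linarith)]; linarith
      · rw [abs_of_pos (by linarith)]; linarith
    calc (dualBump (k+1)).rOut = 3 := rfl
    _ ≤ |t| := h3t
    _ ≤ max ‖t‖ ‖x + t • v‖ := by rw [Real.norm_eq_abs]; exact le_max_left _ _
  have hGint : Integrable G := hGcont.integrable_of_hasCompactSupport hGsupp
  have h1 : δ ≤ ∫ t in Set.Icc s (s + δ), G t := by
    have heq : ∫ t in Set.Icc s (s + δ), (1:ℝ) = δ := by
      rw [setIntegral_const, Real.volume_real_Icc, add_sub_cancel_left,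
        max_eq_left hδpos.le, smul_eq_mul, mul_one]
    have h1' : ∫ t in Set.Icc s (s + δ), (1:ℝ) ≤ ∫ t in Set.Icc s (s + δ), G t := by
      apply setIntegral_mono_on
      · exact integrableOn_const
          (by rw [Real.volume_Icc (a := s) (b := s+δ)]; exact ENNReal.ofReal_ne_top)
      · exact hGint.integrableOn
      · exact measurableSet_Icc
      · intro t ht
        exact (hG1 t ht).ge
    linarith
  have h2 : ∫ t in Set.Icc s (s + δ), G t ≤ ∫ t, G t :=
    setIntegral_le_integral hGint (Filter.Eventually.of_forall fun t => (dualBump _).nonneg)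
  have h3 : 1/(8*R) ≤ δ := by
    rw [hδdef]
    apply one_div_le_one_div_of_le (by positivity)
    nlinarith
  calc 1/(8*R) ≤ δ := h3
  _ ≤ ∫ t in Set.Icc s (s + δ), G t := h1
  _ ≤ ∫ t, G t := h2

set_option maxHeartbeats 1000000 in
/-- The double lebesgue integral on the left-hand side diverges. -/
lemma dual_core_top (k : ℕ) :
    (∫⁻ x : Fin (k+1) → ℝ, ∫⁻ v : Fin (k+1) → ℝ,
      ENNReal.ofReal |∫ t : ℝ, dualG (k+1) (t, x + t • v)| ^ (((k+1:ℕ):ℝ) + 1)) = ⊤ := by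
  set q : ℝ := ((k+1:ℕ):ℝ) + 1 with hqdef
  have hq0 : 0 ≤ q := by positivity
  set T : (Fin (k+1) → ℝ) → ℝ≥0∞ := fun x => ∫⁻ v : Fin (k+1) → ℝ,
      ENNReal.ofReal |∫ t : ℝ, dualG (k+1) (t, x + t • v)| ^ q with hTdef
  -- step A : pointwise lower bound on each box
  have hA : ∀ m : ℕ, ∀ x ∈ dualBox k m,
      ENNReal.ofReal (1/(8*2^(m+3))) ^ q * ENNReal.ofReal (8 * 2^(m+2) / 35) ≤ T x := by
    intro m x hx
    obtain ⟨hx0, -⟩ := dualBox_mem hx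
    set R : ℝ := -(x 0) with hRdef
    have hRl : (2:ℝ)^(m+2) < R := by simp only [hRdef]; linarith [hx0.2]
    have hRu : R ≤ (2:ℝ)^(m+3) := by simp only [hRdef]; linarith [hx0.1]
    have hRpos : (0:ℝ) < R := lt_trans (by positivity) hRl
    have hpt : ∀ v ∈ dualV k x,
        ENNReal.ofReal (1/(8*R)) ^ q ≤
          ENNReal.ofReal |∫ t : ℝ, dualG (k+1) (t, x + t • v)| ^ q := by
      intro v hv
      have := dual_integral_lower k m x v hx hv
      apply ENNReal.rpow_le_rpow _ hq0
      apply ENNReal.ofReal_le_ofReal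
      exact this.trans (le_abs_self _)
    calc ENNReal.ofReal (1/(8*2^(m+3))) ^ q * ENNReal.ofReal (8 * 2^(m+2) / 35)
        ≤ ENNReal.ofReal (1/(8*R)) ^ q * ENNReal.ofReal (8 * R / 35) := by
          apply mul_le_mul'
          · apply ENNReal.rpow_le_rpow _ hq0
            apply ENNReal.ofReal_le_ofReal
            apply one_div_le_one_div_of_le (by positivity)
            nlinarith
          · apply ENNReal.ofReal_le_ofReal
            nlinarith
    _ = ENNReal.ofReal (1/(8*R)) ^ q * volume (dualV k x) := by
          rw [dualV_volume]
    _ = ∫⁻ v in dualV k x, ENNReal.ofReal (1/(8*R)) ^ q := by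
          rw [setLIntegral_const]
    _ ≤ ∫⁻ v in dualV k x,
          ENNReal.ofReal |∫ t : ℝ, dualG (k+1) (t, x + t • v)| ^ q := by
          exact setLIntegral_mono' (dualV_measurableSet k x) hpt
    _ ≤ T x := setLIntegral_le_lintegral _ _
  -- step C : each box contributes a fixed amount
  have hC : ∀ m : ℕ,
      (ENNReal.ofReal (1/(8*2^(m+3))) ^ q * ENNReal.ofReal (8 * 2^(m+2) / 35))
        * volume (dualBox k m) = ENNReal.ofReal (1/(2^(3*k+5) * 35)) := by
    intro m
    rw [dualBox_volume]
    have hqnat : q = ((k+2 : ℕ):ℝ) := by rw [hqdef]; push_cast; ring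
    rw [hqnat, ENNReal.rpow_natCast, ← ENNReal.ofReal_pow (by positivity),
      ← ENNReal.ofReal_mul (by positivity), ← ENNReal.ofReal_mul (by positivity)]
    congr 1
    have hu : (0:ℝ) < 2^m := by positivity
    have e1 : (2:ℝ)^(m+2) = 2^m * 4 := by rw [pow_add]; norm_num
    have e2 : (2:ℝ)^(m+3) = 2^m * 8 := by rw [pow_add]; norm_num
    have e3 : (2:ℝ)^(3*k+5) = 8^k * 32 := by
      rw [pow_add, pow_mul]; norm_num
    rw [e1, e2, e3]
    field_simp
    ring_nf
    rw [show (8:ℝ)^(k*2) = 64^k by rw [pow_mul']; norm_num]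
    calc _ = ((2:ℝ)⁻¹^(m*2) * 2^(m*2)) * ((2:ℝ)⁻¹^(m*k) * 2^(m*k)) * ((1/64:ℝ)^k * 64^k) := by ring
    _ = 1 := by simp only [← mul_pow]; norm_num
  -- step B : sum over the boxes
  have hB : (∑' m : ℕ, ENNReal.ofReal (1/(2^(3*k+5) * 35))) ≤ ∫⁻ x, T x := by
    calc (∑' m : ℕ, ENNReal.ofReal (1/(2^(3*k+5) * 35)))
        = ∑' m : ℕ, (ENNReal.ofReal (1/(8*2^(m+3))) ^ q * ENNReal.ofReal (8 * 2^(m+2) / 35))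
            * volume (dualBox k m) := by
          congr 1; funext m; rw [hC m]
    _ = ∑' m : ℕ, ∫⁻ x in dualBox k m,
          (ENNReal.ofReal (1/(8*2^(m+3))) ^ q * ENNReal.ofReal (8 * 2^(m+2) / 35)) := by
          congr 1; funext m; rw [setLIntegral_const]
    _ ≤ ∑' m : ℕ, ∫⁻ x in dualBox k m, T x := by
          apply ENNReal.tsum_le_tsum
          intro m
          exact setLIntegral_mono' (dualBox_measurableSet k m) (fun x hx => hA m x hx)
    _ = ∫⁻ x in ⋃ m, dualBox k m, T x := by
          rw [lintegral_iUnion (dualBox_measurableSet k) (dualBox_disjoint k)]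
    _ ≤ ∫⁻ x, T x := setLIntegral_le_lintegral _ _
  have htop : (∑' _ : ℕ, ENNReal.ofReal (1/(2^(3*k+5) * 35))) = ⊤ := by
    apply ENNReal.tsum_const_eq_top_of_ne_zero
    simp only [ne_eq, ENNReal.ofReal_eq_zero, not_le]
    positivity
  rw [htop] at hB
  exact top_le_iff.1 hB

set_option maxHeartbeats 1000000 in
/-- The right-hand side mixed-norm integral is finite. -/
lemma dual_rhs_ne_top (k : ℕ) :
    (∫⁻ t : ℝ, (∫⁻ x : Fin (k+1) → ℝ,
      ENNReal.ofReal |dualG (k+1) (t, x)| ^ ((((k+1:ℕ):ℝ) + 1) / 2)) ^ (2 : ℝ)) ≠ ⊤ := by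
  set p2 : ℝ := (((k+1:ℕ):ℝ) + 1) / 2 with hp2def
  have hp2 : 0 < p2 := by positivity
  set K : ℝ≥0∞ := volume (Metric.closedBall (0 : Fin (k+1) → ℝ) 3) with hKdef
  have hKfin : K ≠ ⊤ := (measure_closedBall_lt_top).ne
  have hinner : ∀ t : ℝ, (∫⁻ x : Fin (k+1) → ℝ,
      ENNReal.ofReal |dualG (k+1) (t, x)| ^ p2) ≤ K := by
    intro t
    have hb : ∀ x : Fin (k+1) → ℝ, ENNReal.ofReal |dualG (k+1) (t, x)| ^ p2
        ≤ (Metric.closedBall (0 : Fin (k+1) → ℝ) 3).indicator (fun _ => (1:ℝ≥0∞)) x := by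
      intro x
      by_cases hx : x ∈ Metric.closedBall (0 : Fin (k+1) → ℝ) 3
      · rw [Set.indicator_of_mem hx]
        apply ENNReal.rpow_le_one _ hp2.le
        rw [ENNReal.ofReal_le_one]
        rw [dualG_apply, abs_of_nonneg (dualBump _).nonneg]
        exact (dualBump _).le_one
      · rw [Set.indicator_of_notMem hx]
        have h0 : dualBump (k+1) (t, x) = 0 := by
          apply ContDiffBump.zero_of_le_dist
          rw [dist_zero_right, Prod.norm_def]
          calc (dualBump (k+1)).rOut = 3 := rfl
          _ ≤ ‖x‖ := by
              rw [Metric.mem_closedBall, dist_zero_right, not_le] at hx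
              exact hx.le
          _ ≤ max ‖t‖ ‖x‖ := le_max_right _ _
        rw [dualG_apply, h0]
        simp only [abs_zero, ENNReal.ofReal_zero]
        rw [ENNReal.zero_rpow_of_pos hp2]
    calc (∫⁻ x : Fin (k+1) → ℝ, ENNReal.ofReal |dualG (k+1) (t, x)| ^ p2)
        ≤ ∫⁻ x : Fin (k+1) → ℝ,
            (Metric.closedBall (0 : Fin (k+1) → ℝ) 3).indicator (fun _ => (1:ℝ≥0∞)) x :=
          lintegral_mono hb
    _ = K := by
          rw [lintegral_indicator Metric.isClosed_closedBall.measurableSet, setLIntegral_const,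
            one_mul]
  have houter : ∀ t : ℝ, (∫⁻ x : Fin (k+1) → ℝ,
      ENNReal.ofReal |dualG (k+1) (t, x)| ^ p2) ^ (2:ℝ)
        ≤ (Metric.closedBall (0:ℝ) 3).indicator (fun _ => K ^ (2:ℝ)) t := by
    intro t
    by_cases ht : t ∈ Metric.closedBall (0:ℝ) 3
    · rw [Set.indicator_of_mem ht]
      exact ENNReal.rpow_le_rpow (hinner t) (by norm_num)
    · rw [Set.indicator_of_notMem ht]
      have hzero : (∫⁻ x : Fin (k+1) → ℝ, ENNReal.ofReal |dualG (k+1) (t, x)| ^ p2) = 0 := by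
        have : ∀ x : Fin (k+1) → ℝ, ENNReal.ofReal |dualG (k+1) (t, x)| ^ p2 = 0 := by
          intro x
          have h0 : dualBump (k+1) (t, x) = 0 := by
            apply ContDiffBump.zero_of_le_dist
            rw [dist_zero_right, Prod.norm_def]
            calc (dualBump (k+1)).rOut = 3 := rfl
            _ ≤ ‖t‖ := by
                rw [Metric.mem_closedBall, dist_zero_right, not_le] at ht
                exact ht.le
            _ ≤ max ‖t‖ ‖x‖ := le_max_left _ _
          rw [dualG_apply, h0]
          simp only [abs_zero, ENNReal.ofReal_zero]
          rw [ENNReal.zero_rpow_of_pos hp2]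
        simp_rw [this]
        exact lintegral_zero
      rw [hzero, ENNReal.zero_rpow_of_pos (by norm_num)]
  have hlast : K ^ (2:ℝ) * volume (Metric.closedBall (0:ℝ) 3) ≠ ⊤ :=
    (ENNReal.mul_lt_top (ENNReal.rpow_lt_top_of_nonneg (by norm_num) hKfin)
      measure_closedBall_lt_top).ne
  apply ne_top_of_le_ne_top hlast
  calc (∫⁻ t : ℝ, (∫⁻ x : Fin (k+1) → ℝ,
        ENNReal.ofReal |dualG (k+1) (t, x)| ^ p2) ^ (2 : ℝ))
      ≤ ∫⁻ t : ℝ, (Metric.closedBall (0:ℝ) 3).indicator (fun _ => K ^ (2:ℝ)) t :=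
        lintegral_mono houter
  _ = K ^ (2:ℝ) * volume (Metric.closedBall (0:ℝ) 3) := by
        rw [lintegral_indicator Metric.isClosed_closedBall.measurableSet, setLIntegral_const]

end Aux

/-- there is no finite constant `C` such that the dual endpoint estimate
`‖ρ*g‖_{L^{d+1}(ℝ^d×ℝ^d)} ≤ C ‖g‖_{L^{d+1}_t L^{(d+1)/2}_x}` holds for all Schwartz
functions `g` on `ℝ × ℝ^d`, where `ρ*g(x,v) = ∫_ℝ g(t, x + tv) dt`. -/
theorem dual_endpoint_estimate_fails (d : ℕ) (hd : 1 ≤ d) :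
    ¬ ∃ C : ℝ, ∀ g : SchwartzMap (ℝ × (Fin d → ℝ)) ℝ,
        (∫⁻ x : Fin d → ℝ, ∫⁻ v : Fin d → ℝ,
            ENNReal.ofReal |∫ t : ℝ, g (t, x + t • v)| ^ ((d : ℝ) + 1)) ^ (1 / ((d : ℝ) + 1))
          ≤ ENNReal.ofReal C *
              (∫⁻ t : ℝ, (∫⁻ x : Fin d → ℝ,
                  ENNReal.ofReal |g (t, x)| ^ (((d : ℝ) + 1) / 2)) ^ (2 : ℝ)) ^ (1 / ((d : ℝ) + 1)) := by
  rintro ⟨C, hC⟩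
  obtain ⟨k, rfl⟩ : ∃ k, d = k + 1 := ⟨d - 1, (Nat.succ_pred_eq_of_pos hd).symm⟩
  have hmain := hC (dualG (k+1))
  have hp : (0:ℝ) < 1 / (((k+1:ℕ):ℝ) + 1) := by positivity
  rw [dual_core_top k, ENNReal.top_rpow_of_pos hp] at hmain
  have hfin : ENNReal.ofReal C *
      (∫⁻ t : ℝ, (∫⁻ x : Fin (k+1) → ℝ,
        ENNReal.ofReal |dualG (k+1) (t, x)| ^ ((((k+1:ℕ):ℝ) + 1) / 2)) ^ (2 : ℝ))
          ^ (1 / (((k+1:ℕ):ℝ) + 1)) < ⊤ :=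
    ENNReal.mul_lt_top ENNReal.ofReal_lt_top
      (ENNReal.rpow_lt_top_of_nonneg hp.le (dual_rhs_ne_top k))
  exact hfin.ne (top_le_iff.1 hmain)
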